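/- Suppose ρ > 1, H is a horocycle in DL(n,n), and p, q are two points of DL(n,n) with p ∈ Sh(H,ρ) and q ∉ Sh(H,ρ). Then any path connecting p to q passes within distance ρ of H. -/

import Mathlib

open Set
open scoped ENNReal

noncomputable section

/-- A vertex of the regular tree with `m` downward branches (valence `m+1`), equipped
with a Busemann height function for a chosen end: the vertex at height `ht` is recorded
by its digits below the chosen end, which are eventually `0` upward and vanish below
the height of the vertex. -/
structure TreeVtx (m : ℕ) where
  ht : ℤ
  dig : ℤ → ℕ
  dig_lt : ∀ i, dig i < m
  dig_lo : ∀ i, i < ht → dig i = 0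
  dig_hi : ∃ N : ℤ, ∀ i, N ≤ i → dig i = 0

namespace DLGeo

/-- Adjacency in the regular tree. -/
def treeAdj {m : ℕ} (u v : TreeVtx m) : Prop :=
  (v.ht = u.ht + 1 ∧ ∀ i, v.ht ≤ i → v.dig i = u.dig i) ∨
  (u.ht = v.ht + 1 ∧ ∀ i, u.ht ≤ i → u.dig i = v.dig i)

/-- `u` is an ancestor of `v` (lies on the upward vertical ray from `v`). -/
def ancestor {m : ℕ} (u v : TreeVtx m) : Prop :=
  v.ht ≤ u.ht ∧ ∀ i, u.ht ≤ i → u.dig i = v.dig i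

/-- A vertex of the Diestel–Leader graph `DL(m,n)`: a pair of tree vertices with
opposite Busemann heights. -/
structure DLVtx (m n : ℕ) where
  a : TreeVtx m
  b : TreeVtx n
  bal : a.ht + b.ht = 0

/-- Adjacency in `DL(m,n)`: simultaneous adjacency in both tree coordinates. -/
def dlAdj {m n : ℕ} (u v : DLVtx m n) : Prop := treeAdj u.a v.a ∧ treeAdj u.b v.b

/-- The height function on `DL(m,n)`. -/
def dlHeight {m n : ℕ} (u : DLVtx m n) : ℤ := u.a.ht

/-- A walk of length `k` from `u` to `v` in a graph. -/
def IsWalk {V : Type*} (adj : V → V → Prop) (k : ℕ) (w : ℕ → V) (u v : V) : Prop :=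
  w 0 = u ∧ w k = v ∧ ∀ i, i < k → adj (w i) (w (i + 1))

/-- The graph metric (with unit edge lengths), valued in `ℝ≥0∞`. -/
def gdist {V : Type*} (adj : V → V → Prop) (u v : V) : ℝ≥0∞ :=
  sInf {c : ℝ≥0∞ | ∃ (k : ℕ) (w : ℕ → V), c = (k : ℝ≥0∞) ∧ IsWalk adj k w u v}

/-- `p` lies below `q` on a vertical geodesic of `DL(m,n)`. -/
def dlBelow {m n : ℕ} (p q : DLVtx m n) : Prop := ancestor q.a p.a ∧ ancestor p.b q.b

/-- The `y`-horocycle of `DL(m,n)` determined by the first tree coordinate `v₀`. -/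
def yHoro {m n : ℕ} (v₀ : TreeVtx m) : Set (DLVtx m n) := {u | u.a = v₀}

/-- The `ρ`-shadow of a subset of a `y`-horocycle: the union of the downward vertical
geodesic rays starting within distance `ρ` of it. -/
def dlShadow {m n : ℕ} (ρ : ℝ) (H : Set (DLVtx m n)) : Set (DLVtx m n) :=
  {p | ∃ q : DLVtx m n, (∃ h ∈ H, gdist dlAdj q h ≤ ENNReal.ofReal ρ) ∧ dlBelow p q}

end DLGeo

open DLGeo

----------------------------------------------------------------
-- auxiliary development
----------------------------------------------------------------
namespace DLGeo

variable {n : ℕ}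

lemma npos (v : TreeVtx n) : 0 < n :=
  lt_of_le_of_lt (Nat.zero_le _) (v.dig_lt 0)

lemma TreeVtx.ext' {u v : TreeVtx n} (h1 : u.ht = v.ht)
    (h2 : ∀ i, u.dig i = v.dig i) : u = v := by
  cases u with | mk a b c d e =>
  cases v with | mk a' b' c' d' e' =>
  dsimp at h1 h2
  subst h1
  have hb : b = b' := funext h2
  subst hb
  rfl

lemma DLVtx.ext' {m : ℕ} {u v : DLVtx m n} (h1 : u.a = v.a) (h2 : u.b = v.b) : u = v := by
  cases u; cases v
  dsimp at h1 h2
  subst h1; subst h2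
  rfl

/-- One step up in the tree. -/
def parentV (v : TreeVtx n) : TreeVtx n where
  ht := v.ht + 1
  dig i := if v.ht + 1 ≤ i then v.dig i else 0
  dig_lt i := by
    split
    · exact v.dig_lt i
    · exact npos v
  dig_lo i hi := by
    rw [if_neg (by omega)]
  dig_hi := by
    obtain ⟨N, hN⟩ := v.dig_hi
    refine ⟨N, fun i hi => ?_⟩
    split
    · exact hN i hi
    · rfl

/-- One step down (digit 0 branch). -/
def child0 (v : TreeVtx n) : TreeVtx n where
  ht := v.ht - 1
  dig := v.dig
  dig_lt := v.dig_lt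
  dig_lo i hi := v.dig_lo i (by omega)
  dig_hi := v.dig_hi

lemma adj_parentV (v : TreeVtx n) : treeAdj v (parentV v) := by
  left
  constructor
  · rfl
  · intro i hi
    show (if v.ht + 1 ≤ i then v.dig i else 0) = v.dig i
    exact if_pos hi

lemma adj_child0 (v : TreeVtx n) : treeAdj v (child0 v) :=
  Or.inr ⟨by simp [child0], fun _ _ => rfl⟩

/-- Descendant of `v` at height `t ≤ v.ht` (all digits 0 below `v.ht`). -/
def descend (v : TreeVtx n) (t : ℤ) (h : t ≤ v.ht) : TreeVtx n where
  ht := t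
  dig i := if v.ht ≤ i then v.dig i else 0
  dig_lt i := by
    split
    · exact v.dig_lt i
    · exact npos v
  dig_lo i hi := by
    rw [if_neg (by omega)]
  dig_hi := by
    obtain ⟨N, hN⟩ := v.dig_hi
    refine ⟨N, fun i hi => ?_⟩
    split
    · exact hN i hi
    · rfl

lemma ancestor_descend (v : TreeVtx n) (t : ℤ) (h : t ≤ v.ht) :
    ancestor v (descend v t h) := by
  constructor
  · exact h
  · intro i hi
    show v.dig i = (if v.ht ≤ i then v.dig i else 0)
    rw [if_pos hi]

lemma ancestor_refl (v : TreeVtx n) : ancestor v v := ⟨le_refl _, fun _ _ => rfl⟩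

lemma ancestor_trans {u v w : TreeVtx n} (h1 : ancestor u v) (h2 : ancestor v w) :
    ancestor u w :=
  ⟨le_trans h2.1 h1.1, fun i hi => (h1.2 i hi).trans (h2.2 i (le_trans h1.1 hi))⟩

lemma ancestor_eq_of_ht {u v : TreeVtx n} (h : ancestor u v) (hh : u.ht = v.ht) : u = v := by
  refine TreeVtx.ext' hh (fun i => ?_)
  rcases le_or_gt u.ht i with hi | hi
  · exact h.2 i hi
  · rw [u.dig_lo i hi, v.dig_lo i (by omega)]

/-- Lift of the second coordinate along a tree walk in the first coordinate. -/
def liftB (u : ℕ → TreeVtx n) (b0 : TreeVtx n) : ℕ → TreeVtx n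
  | 0 => b0
  | i + 1 =>
    if (u (i + 1)).ht = (u i).ht + 1 then child0 (liftB u b0 i)
    else parentV (liftB u b0 i)

lemma liftB_adj (u : ℕ → TreeVtx n) (b0 : TreeVtx n) (i : ℕ) :
    treeAdj (liftB u b0 i) (liftB u b0 (i + 1)) := by
  show treeAdj _ (if _ then _ else _)
  split
  · exact adj_child0 _
  · exact adj_parentV _

lemma liftB_ht {u : ℕ → TreeVtx n} {b0 : TreeVtx n} {k : ℕ}
    (hb : b0.ht = -(u 0).ht) (hadj : ∀ j, j < k → treeAdj (u j) (u (j + 1))) :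
    ∀ i, i ≤ k → (liftB u b0 i).ht = -(u i).ht := by
  intro i
  induction i with
  | zero => intro _; exact hb
  | succ i ih =>
    intro hik
    have hi : (liftB u b0 i).ht = -(u i).ht := ih (by omega)
    have hadj' := hadj i (by omega)
    show (if (u (i + 1)).ht = (u i).ht + 1 then child0 (liftB u b0 i)
      else parentV (liftB u b0 i)).ht = _
    split
    · show (liftB u b0 i).ht - 1 = _
      rename_i hcond
      omega
    · rename_i hcond
      have hstep : (u i).ht = (u (i + 1)).ht + 1 := by
        rcases hadj' with h | h
        · exact absurd h.1 hcond
        · exact h.1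
      show (liftB u b0 i).ht + 1 = _
      omega

lemma walk_proj {m : ℕ} {k : ℕ} {W : ℕ → DLVtx n m} {x h : DLVtx n m}
    (hW : IsWalk dlAdj k W x h) :
    IsWalk treeAdj k (fun i => (W i).a) x.a h.a :=
  ⟨congrArg DLVtx.a hW.1, congrArg DLVtx.a hW.2.1, fun i hi => (hW.2.2 i hi).1⟩

/-- Lift a tree walk in the first coordinate to a DL walk. -/
lemma dl_lift {k : ℕ} {u : ℕ → TreeVtx n} {x : DLVtx n n} {v₀ : TreeVtx n}
    (hu : IsWalk treeAdj k u x.a v₀) :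
    ∃ h : DLVtx n n, h.a = v₀ ∧ ∃ W : ℕ → DLVtx n n, IsWalk dlAdj k W x h := by
  classical
  have hb : x.b.ht = -(u 0).ht := by rw [hu.1]; have := x.bal; omega
  have hht := liftB_ht (u := u) (b0 := x.b) (k := k) hb hu.2.2
  set W : ℕ → DLVtx n n := fun i =>
    if hik : i ≤ k then ⟨u i, liftB u x.b i, by have := hht i hik; omega⟩ else x with hWdef
  have hW0 : W 0 = x := by
    rw [hWdef]; dsimp only
    rw [dif_pos (Nat.zero_le k)]
    exact DLVtx.ext' hu.1 rfl
  have hWk : (W k).a = v₀ := by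
    rw [hWdef]; dsimp only
    rw [dif_pos (le_refl k)]
    exact hu.2.1
  refine ⟨W k, hWk, W, hW0, rfl, fun i hi => ?_⟩
  rw [hWdef]; dsimp only
  rw [dif_pos (by omega : i ≤ k), dif_pos (by omega : i + 1 ≤ k)]
  exact ⟨hu.2.2 i hi, liftB_adj u x.b i⟩

lemma gdist_le_walk {V : Type*} {adj : V → V → Prop} {k : ℕ} {w : ℕ → V} {u v : V}
    (h : IsWalk adj k w u v) : gdist adj u v ≤ (k : ℝ≥0∞) :=
  sInf_le ⟨k, w, rfl, h⟩

lemma gdist_walk_exists {V : Type*} {adj : V → V → Prop} {u v : V} {ρ : ℝ}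
    (hρ : 0 ≤ ρ) (h : gdist adj u v ≤ ENNReal.ofReal ρ) :
    ∃ k : ℕ, (k : ℝ) ≤ ρ ∧ ∃ w : ℕ → V, IsWalk adj k w u v := by
  classical
  have hne : ∃ k : ℕ, ∃ w : ℕ → V, IsWalk adj k w u v := by
    by_contra hempty
    push_neg at hempty
    have : {c : ℝ≥0∞ | ∃ (k : ℕ) (w : ℕ → V), c = (k : ℝ≥0∞) ∧ IsWalk adj k w u v} = ∅ := by
      ext c; simp only [Set.mem_setOf_eq, Set.mem_empty_iff_false, iff_false]
      rintro ⟨k, w, -, hw⟩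
      exact hempty k w hw
    rw [gdist, this, sInf_empty] at h
    exact (not_le_of_gt ENNReal.ofReal_lt_top (le_of_eq rfl |>.trans h)).elim
  set k₀ := Nat.find hne with hk₀
  have hspec := Nat.find_spec hne
  have hlow : (k₀ : ℝ≥0∞) ≤ gdist adj u v := by
    apply le_sInf
    rintro c ⟨k, w, rfl, hw⟩
    exact_mod_cast Nat.find_min' hne ⟨w, hw⟩
  have : (k₀ : ℝ≥0∞) ≤ ENNReal.ofReal ρ := le_trans hlow h
  rw [← ENNReal.ofReal_natCast k₀, ENNReal.ofReal_le_ofReal_iff hρ] at this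
  exact ⟨k₀, this, hspec⟩

variable (ρ : ℝ) (v₀ : TreeVtx n)

def TreeClose (a : TreeVtx n) : Prop :=
  ∃ k : ℕ, (k : ℝ) ≤ ρ ∧ ∃ u : ℕ → TreeVtx n, IsWalk treeAdj k u a v₀

def Close (x : DLVtx n n) : Prop :=
  ∃ h ∈ yHoro (n := n) v₀, gdist dlAdj x h ≤ ENNReal.ofReal ρ

variable {ρ v₀}

lemma close_of_treeClose (hρ : 0 ≤ ρ) {x : DLVtx n n} (h : TreeClose ρ v₀ x.a) :
    Close ρ v₀ x := by
  obtain ⟨k, hk, u, hu⟩ := h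
  obtain ⟨hh, hha, W, hW⟩ := dl_lift hu
  refine ⟨hh, hha, le_trans (gdist_le_walk hW) ?_⟩
  rw [← ENNReal.ofReal_natCast k]
  exact ENNReal.ofReal_le_ofReal hk

lemma treeClose_of_close {x : DLVtx n n} (hρ : 0 ≤ ρ) (h : Close ρ v₀ x) :
    TreeClose ρ v₀ x.a := by
  obtain ⟨hh, hha, hd⟩ := h
  obtain ⟨k, hk, W, hW⟩ := gdist_walk_exists hρ hd
  exact ⟨k, hk, _, by have := walk_proj hW; rwa [hha] at this⟩

lemma shadow_iff (hρ : 0 ≤ ρ) {x : DLVtx n n} :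
    x ∈ dlShadow ρ (yHoro (n := n) v₀) ↔ ∃ u : TreeVtx n, ancestor u x.a ∧ TreeClose ρ v₀ u := by
  constructor
  · rintro ⟨r, ⟨h, hhH, hdist⟩, hbel⟩
    refine ⟨r.a, hbel.1, ?_⟩
    obtain ⟨k, hk, W, hW⟩ := gdist_walk_exists hρ hdist
    exact ⟨k, hk, _, by have := walk_proj hW; rwa [hhH] at this⟩
  · rintro ⟨u, hanc, htc⟩
    have hxb : -u.ht ≤ x.b.ht := by have := x.bal; have := hanc.1; omega
    set r : DLVtx n n := ⟨u, descend x.b (-u.ht) hxb, by show u.ht + -u.ht = 0; omega⟩ with hr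
    obtain ⟨k, hk, uw, huw⟩ := htc
    obtain ⟨hh, hha, W, hW⟩ := dl_lift (x := r) huw
    refine ⟨r, ⟨hh, hha, ?_⟩, hanc, ancestor_descend x.b (-u.ht) hxb⟩
    refine le_trans (gdist_le_walk hW) ?_
    rw [← ENNReal.ofReal_natCast k]
    exact ENNReal.ofReal_le_ofReal hk

/-- Key step: a shadow point adjacent to a non-shadow point is close to the horocycle. -/
lemma close_of_boundary (hρ : 0 ≤ ρ) {x y : DLVtx n n}
    (hx : x ∈ dlShadow ρ (yHoro (n := n) v₀))
    (hy : y ∉ dlShadow ρ (yHoro (n := n) v₀))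
    (hadj : dlAdj x y) : Close ρ v₀ x := by
  obtain ⟨u, hanc, htc⟩ := (shadow_iff hρ).mp hx
  rcases hadj.1 with hup | hdown
  · -- y is above x : y.a.ht = x.a.ht + 1
    rcases eq_or_lt_of_le hanc.1 with hht | hht
    · have : u = x.a := ancestor_eq_of_ht hanc hht.symm
      exact close_of_treeClose hρ (this ▸ htc)
    · exfalso
      apply hy
      rw [shadow_iff hρ]
      refine ⟨u, ⟨by omega, fun i hi => ?_⟩, htc⟩
      rw [hanc.2 i hi, hup.2 i (by omega)]
  · -- y is below x : x.a.ht = y.a.ht + 1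
    exfalso
    apply hy
    rw [shadow_iff hρ]
    refine ⟨u, ancestor_trans hanc ⟨by omega, fun i hi => hdown.2 i hi⟩, htc⟩

lemma exists_boundary {P : ℕ → Prop} {k : ℕ} (h0 : P 0) (hk : ¬ P k) :
    ∃ i, i < k ∧ P i ∧ ¬ P (i + 1) := by
  classical
  have hne : ∃ i, ¬ P i := ⟨k, hk⟩
  set j := Nat.find hne with hj
  have hjspec : ¬ P j := Nat.find_spec hne
  have hjk : j ≤ k := Nat.find_min' hne hk
  have hj0 : j ≠ 0 := fun h => hjspec (h ▸ h0)
  refine ⟨j - 1, by omega, ?_, by rwa [Nat.sub_add_cancel (by omega)]⟩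
  by_contra hP
  exact absurd (Nat.find_min' hne hP) (by omega)

end DLGeo


/-- **Lemma (shadows disconnect `DL(n,n)`).**
Suppose `ρ > 1`, `H` is a horocycle in `DL(n,n)`, and `p, q` are two points with
`p ∈ Sh(H,ρ)` and `q ∉ Sh(H,ρ)`.  Then any path connecting `p` to `q` passes within
distance `ρ` of `H`. -/
theorem dl_shadows_disconnect
    (n : ℕ) (hn : 2 ≤ n) (ρ : ℝ) (hρ : 1 < ρ) (v₀ : TreeVtx n)
    (p q : DLVtx n n) (hp : p ∈ dlShadow ρ (yHoro v₀))
    (hq : q ∉ dlShadow ρ (yHoro v₀))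
    (k : ℕ) (w : ℕ → DLVtx n n) (hw : IsWalk dlAdj k w p q) :
    ∃ i ≤ k, ∃ h ∈ yHoro (n := n) v₀, gdist dlAdj (w i) h ≤ ENNReal.ofReal ρ := by
  have hρ0 : 0 ≤ ρ := le_of_lt (lt_trans one_pos hρ)
  have h0 : w 0 ∈ dlShadow ρ (yHoro (n := n) v₀) := hw.1 ▸ hp
  have hk : w k ∉ dlShadow ρ (yHoro (n := n) v₀) := hw.2.1 ▸ hq
  obtain ⟨i, hik, hi, hi1⟩ := exists_boundary (P := fun i => w i ∈ dlShadow ρ (yHoro (n := n) v₀)) h0 hk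
  have := close_of_boundary hρ0 hi hi1 (hw.2.2 i hik)
  exact ⟨i, le_of_lt hik, this⟩
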